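/- Let k_0 ≥ 1 and k ≥ 1 be integers and set n = k_0 + k. Let X_0 be an n×k_0 real matrix and X_i an n×k real matrix such that the n×n matrix [X_0 X_i] is invertible. Let P_0 = X_0(X_0ᵀX_0)⁻¹X_0ᵀ and V = (I_n − P_0)X_i. Then VᵀV is invertible and for every y ∈ ℝⁿ: yᵀ V (VᵀV)⁻¹ Vᵀ y = yᵀ(I_n − P_0)y. -/

import Mathlib

open Matrix

private lemma eq_zero_of_trace_transpose_mul_self
    {n m : Type*} [Fintype n] [Fintype m] (D : Matrix n m ℝ)
    (h : Matrix.trace (Dᵀ * D) = 0) : D = 0 := by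
  classical
  have h' : ∑ i, ∑ j, D j i * D j i = 0 := by
    simpa [Matrix.trace, Matrix.diag, Matrix.mul_apply, Matrix.transpose_apply] using h
  ext j i
  have h1 := (Finset.sum_eq_zero_iff_of_nonneg (fun i _ =>
    Finset.sum_nonneg fun j _ => mul_self_nonneg (D j i))).mp h' i (Finset.mem_univ i)
  have h2 := (Finset.sum_eq_zero_iff_of_nonneg (fun j _ =>
    mul_self_nonneg (D j i))).mp h1 j (Finset.mem_univ j)
  simpa [mul_self_eq_zero] using h2

set_option maxHeartbeats 1000000 in
theorem projected_design_captures_null_SSE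
    (k0 k : ℕ) (hk0 : 1 ≤ k0) (hk : 1 ≤ k)
    (X0 : Matrix (Fin (k0 + k)) (Fin k0) ℝ)
    (Xi : Matrix (Fin (k0 + k)) (Fin k) ℝ)
    (hrank : (Matrix.fromCols X0 Xi).rank = k0 + k) :
    IsUnit ((((1 : Matrix (Fin (k0 + k)) (Fin (k0 + k)) ℝ) -
        X0 * (X0ᵀ * X0)⁻¹ * X0ᵀ) * Xi)ᵀ *
        (((1 : Matrix (Fin (k0 + k)) (Fin (k0 + k)) ℝ) -
        X0 * (X0ᵀ * X0)⁻¹ * X0ᵀ) * Xi)) ∧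
    ∀ y : Fin (k0 + k) → ℝ,
      letI P0 : Matrix (Fin (k0 + k)) (Fin (k0 + k)) ℝ := X0 * (X0ᵀ * X0)⁻¹ * X0ᵀ
      letI V : Matrix (Fin (k0 + k)) (Fin k) ℝ := (1 - P0) * Xi
      y ⬝ᵥ ((V * (Vᵀ * V)⁻¹ * Vᵀ) *ᵥ y) = y ⬝ᵥ ((1 - P0) *ᵥ y) := by
  classical
  set M := Matrix.fromCols X0 Xi with hM
  -- M is injective as a linear map
  have hMinj : Function.Injective M.mulVec := by
    have hsurj : Function.Surjective M.mulVecLin := by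
      rw [← LinearMap.range_eq_top]
      apply Submodule.eq_top_of_finrank_eq
      rw [Module.finrank_fintype_fun_eq_card]
      simpa [Matrix.rank] using hrank
    have hinj : Function.Injective M.mulVecLin := by
      rw [LinearMap.injective_iff_surjective_of_finrank_eq_finrank (by
        simp [Module.finrank_fintype_fun_eq_card, Fintype.card_sum])]
      exact hsurj
    exact hinj
  -- X0 has trivial kernel
  have hX0inj : ∀ v : Fin k0 → ℝ, X0 *ᵥ v = 0 → v = 0 := by
    intro v hv
    have h0 : M *ᵥ Sum.elim v (0 : Fin k → ℝ) = M *ᵥ 0 := by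
      simp [hM, Matrix.fromCols_mulVec_sumElim, hv]
    have := hMinj h0
    funext i
    simpa using congrFun this (Sum.inl i)
  -- X0ᵀ X0 is invertible
  have hU0 : IsUnit (X0ᵀ * X0) := by
    have hker0 : LinearMap.ker (X0ᵀ * X0).mulVecLin = ⊥ := by
      rw [Matrix.ker_mulVecLin_transpose_mul_self, LinearMap.ker_eq_bot']
      intro v hv
      exact hX0inj v (by simpa using hv)
    rw [← Matrix.mulVec_injective_iff_isUnit, ← Matrix.coe_mulVecLin]
    exact LinearMap.ker_eq_bot.mp hker0
  have hA1 : (X0ᵀ * X0)⁻¹ * (X0ᵀ * X0) = 1 :=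
    Matrix.nonsing_inv_mul _ ((Matrix.isUnit_iff_isUnit_det _).mp hU0)
  set P0 : Matrix (Fin (k0 + k)) (Fin (k0 + k)) ℝ := X0 * (X0ᵀ * X0)⁻¹ * X0ᵀ with hP0def
  have hP0X0 : P0 * X0 = X0 := by
    rw [hP0def]
    simp only [Matrix.mul_assoc]
    rw [hA1, Matrix.mul_one]
  have hP0symm : P0ᵀ = P0 := by
    rw [hP0def]
    simp [Matrix.transpose_mul, Matrix.transpose_nonsing_inv, Matrix.mul_assoc]
  have hP0idem : P0 * P0 = P0 := by
    conv_lhs => rw [hP0def]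
    rw [show X0 * (X0ᵀ * X0)⁻¹ * X0ᵀ * P0 = X0 * ((X0ᵀ * X0)⁻¹ * (X0ᵀ * P0)) by
      simp only [Matrix.mul_assoc]]
    have : X0ᵀ * P0 = X0ᵀ := by
      calc X0ᵀ * P0 = (P0ᵀ * X0)ᵀ := by simp [Matrix.transpose_mul]
      _ = X0ᵀ := by rw [hP0symm, hP0X0]
    rw [this, ← Matrix.mul_assoc, hP0def]
  -- V and its properties
  set V : Matrix (Fin (k0 + k)) (Fin k) ℝ := (1 - P0) * Xi with hVdef
  have hQidem : ((1 : Matrix (Fin (k0+k)) (Fin (k0+k)) ℝ) - P0) * (1 - P0) = 1 - P0 := by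
    simp [Matrix.sub_mul, Matrix.mul_sub, hP0idem]
  have hQsymm : ((1 : Matrix (Fin (k0+k)) (Fin (k0+k)) ℝ) - P0)ᵀ = 1 - P0 := by
    simp [Matrix.transpose_sub, hP0symm]
  have hQV : ((1 : Matrix (Fin (k0+k)) (Fin (k0+k)) ℝ) - P0) * V = V := by
    rw [hVdef, ← Matrix.mul_assoc, hQidem]
  -- V has trivial kernel
  have hVker : ∀ v : Fin k → ℝ, V *ᵥ v = 0 → v = 0 := by
    intro v hv
    set u : Fin k0 → ℝ := ((X0ᵀ * X0)⁻¹ * (X0ᵀ * Xi)) *ᵥ v with hu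
    have hXiv : Xi *ᵥ v = X0 *ᵥ u := by
      have h1 : Xi *ᵥ v - P0 *ᵥ (Xi *ᵥ v) = 0 := by
        have := hv
        rw [hVdef, ← Matrix.mulVec_mulVec, Matrix.sub_mulVec, Matrix.one_mulVec] at this
        exact this
      have h2 : Xi *ᵥ v = P0 *ᵥ (Xi *ᵥ v) := by
        have := sub_eq_zero.mp h1; exact this
      rw [h2, hP0def, hu]
      simp [Matrix.mulVec_mulVec, Matrix.mul_assoc]
    have h0 : M *ᵥ Sum.elim (-u) v = M *ᵥ 0 := by
      simp [hM, Matrix.fromCols_mulVec_sumElim, Matrix.mulVec_neg, hXiv]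
    have := hMinj h0
    funext j
    simpa using congrFun this (Sum.inr j)
  -- VᵀV is invertible
  have hUV : IsUnit (Vᵀ * V) := by
    have hkerV : LinearMap.ker (Vᵀ * V).mulVecLin = ⊥ := by
      rw [Matrix.ker_mulVecLin_transpose_mul_self, LinearMap.ker_eq_bot']
      intro v hv
      exact hVker v (by simpa using hv)
    rw [← Matrix.mulVec_injective_iff_isUnit, ← Matrix.coe_mulVecLin]
    exact LinearMap.ker_eq_bot.mp hkerV
  have hB1 : (Vᵀ * V)⁻¹ * (Vᵀ * V) = 1 :=
    Matrix.nonsing_inv_mul _ ((Matrix.isUnit_iff_isUnit_det _).mp hUV)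
  -- the projection W onto col V equals 1 - P0
  set W : Matrix (Fin (k0+k)) (Fin (k0+k)) ℝ := V * (Vᵀ * V)⁻¹ * Vᵀ with hWdef
  have hWsymm : Wᵀ = W := by
    rw [hWdef]
    simp [Matrix.transpose_mul, Matrix.transpose_nonsing_inv, Matrix.mul_assoc]
  have hQW : ((1 : Matrix (Fin (k0+k)) (Fin (k0+k)) ℝ) - P0) * W = W := by
    rw [hWdef, ← Matrix.mul_assoc, ← Matrix.mul_assoc, hQV]
  have hWQ : W * ((1 : Matrix (Fin (k0+k)) (Fin (k0+k)) ℝ) - P0) = W := by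
    calc W * (1 - P0) = ((1 - P0)ᵀ * Wᵀ)ᵀ := by
          simp [Matrix.transpose_mul, hWsymm, hQsymm]
      _ = W := by rw [hQsymm, hWsymm, hQW, hWsymm]
  have hWW : W * W = W := by
    rw [hWdef]
    rw [show V * (Vᵀ * V)⁻¹ * Vᵀ * (V * (Vᵀ * V)⁻¹ * Vᵀ)
        = V * ((Vᵀ * V)⁻¹ * ((Vᵀ * V) * ((Vᵀ * V)⁻¹ * Vᵀ))) by
      simp only [Matrix.mul_assoc]]
    rw [← Matrix.mul_assoc (Vᵀ * V), Matrix.mul_nonsing_inv _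
      ((Matrix.isUnit_iff_isUnit_det _).mp hUV), Matrix.one_mul, ← Matrix.mul_assoc]
  -- trace computations
  have htrP0 : Matrix.trace P0 = (k0 : ℝ) := by
    rw [hP0def, Matrix.mul_assoc, Matrix.trace_mul_comm, Matrix.mul_assoc, hA1]
    simp [Matrix.trace_one]
  have htrW : Matrix.trace W = (k : ℝ) := by
    rw [hWdef, Matrix.mul_assoc, Matrix.trace_mul_comm, Matrix.mul_assoc, hB1]
    simp [Matrix.trace_one]
  -- the difference D is symmetric idempotent with zero trace, hence zero
  set D : Matrix (Fin (k0+k)) (Fin (k0+k)) ℝ := (1 - P0) - W with hDdef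
  have hDsymm : Dᵀ = D := by
    rw [hDdef]
    simp [Matrix.transpose_sub, hQsymm, hWsymm]
  have hDD : D * D = D := by
    rw [hDdef]
    rw [Matrix.sub_mul, Matrix.mul_sub, hQidem, hQW, Matrix.mul_sub, hWQ, hWW]
    abel
  have htrD : Matrix.trace D = 0 := by
    rw [hDdef, Matrix.trace_sub, Matrix.trace_sub, Matrix.trace_one, htrP0, htrW]
    simp only [Fintype.card_fin]
    push_cast
    ring
  have hD0 : D = 0 := eq_zero_of_trace_transpose_mul_self D (by rw [hDsymm, hDD, htrD])
  have hWQeq : V * (Vᵀ * V)⁻¹ * Vᵀ = 1 - P0 := by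
    rw [← hWdef]
    have := sub_eq_zero.mp (hDdef ▸ hD0 : (1 - P0) - W = 0)
    exact this.symm
  refine ⟨hUV, ?_⟩
  intro y
  show y ⬝ᵥ ((V * (Vᵀ * V)⁻¹ * Vᵀ) *ᵥ y) = y ⬝ᵥ ((1 - P0) *ᵥ y)
  rw [hWQeq]
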